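/- arXiv:0808.1206 — 3 statements merged into one kernel-verified Lean document; each statement's English description precedes it below -/
import Mathlib

section
/- Let a ∈ (0,1), γ(z) = (z − a)/(1 − a z), and let Γ₂ be the group of Möbius automorphisms of the disk generated by β(z) = −z and γ. Then Γ₂ is isomorphic to the free product ℤ/2 ∗ ℤ/2; equivalently, setting α = β ∘ γ, every element of Γ₂ is uniquely of the form α^m or α^m ∘ β with m ∈ ℤ, and α^m is the identity only when m = 0. -/
open Complex Set

noncomputable section

/-- The parameters `a_m = ((1+a)^m − (1−a)^m)/((1+a)^m + (1−a)^m)` for `m : ℤ`. -/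
def bseq (a : ℝ) (m : ℤ) : ℝ :=
  ((1 + a) ^ m - (1 - a) ^ m) / ((1 + a) ^ m + (1 - a) ^ m)

/-- The `m`-th power (for `m : ℤ`) of the hyperbolic map `γ(z) = (z − a)/(1 − a z)`. -/
def gammaPow (a : ℝ) (m : ℤ) : ℂ → ℂ :=
  fun z => (z - (bseq a m : ℝ)) / (1 - (bseq a m : ℝ) * z)

lemma bden_pos {a : ℝ} (ha : a ∈ Set.Ioo (0:ℝ) 1) (m : ℤ) :
    0 < (1 + a) ^ m + (1 - a) ^ m := by
  obtain ⟨h0, h1⟩ := ha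
  have hp : (0:ℝ) < 1 + a := by linarith
  have hq : (0:ℝ) < 1 - a := by linarith
  positivity

lemma bseq_mem {a : ℝ} (ha : a ∈ Set.Ioo (0:ℝ) 1) (m : ℤ) :
    bseq a m ∈ Set.Ioo (-1:ℝ) 1 := by
  obtain ⟨h0, h1⟩ := ha
  have hp : (0:ℝ) < (1 + a) ^ m := zpow_pos (by linarith) m
  have hq : (0:ℝ) < (1 - a) ^ m := zpow_pos (by linarith) m
  unfold bseq
  constructor
  · rw [lt_div_iff₀ (by linarith)]; linarith
  · rw [div_lt_one (by linarith)]; linarith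

lemma bseq_zero (a : ℝ) : bseq a 0 = 0 := by simp [bseq]

lemma bseq_one {a : ℝ} (ha : a ∈ Set.Ioo (0:ℝ) 1) : bseq a 1 = a := by
  obtain ⟨h0, h1⟩ := ha
  simp only [bseq, zpow_one]
  field_simp
  ring

lemma bseq_neg {a : ℝ} (ha : a ∈ Set.Ioo (0:ℝ) 1) (m : ℤ) : bseq a (-m) = - bseq a m := by
  obtain ⟨h0, h1⟩ := ha
  have hp : (0:ℝ) < (1 + a) ^ m := zpow_pos (by linarith) m
  have hq : (0:ℝ) < (1 - a) ^ m := zpow_pos (by linarith) m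
  simp only [bseq, zpow_neg]
  have hp' := hp.ne'
  have hq' := hq.ne'
  have hd : (0:ℝ) < (1 + a) ^ m + (1 - a) ^ m := by positivity
  have hd2 : (0:ℝ) < ((1 + a) ^ m)⁻¹ + ((1 - a) ^ m)⁻¹ := by positivity
  field_simp
  ring

lemma bseq_add {a : ℝ} (ha : a ∈ Set.Ioo (0:ℝ) 1) (m k : ℤ) :
    bseq a (m + k) * (1 + bseq a m * bseq a k) = bseq a m + bseq a k := by
  obtain ⟨h0, h1⟩ := ha
  have hp : (0:ℝ) < 1 + a := by linarith
  have hq : (0:ℝ) < 1 - a := by linarith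
  have hpm : (0:ℝ) < (1 + a) ^ m := zpow_pos hp m
  have hqm : (0:ℝ) < (1 - a) ^ m := zpow_pos hq m
  have hpk : (0:ℝ) < (1 + a) ^ k := zpow_pos hp k
  have hqk : (0:ℝ) < (1 - a) ^ k := zpow_pos hq k
  simp only [bseq, zpow_add₀ hp.ne', zpow_add₀ hq.ne']
  field_simp
  ring

lemma bseq_inj {a : ℝ} (ha : a ∈ Set.Ioo (0:ℝ) 1) {m k : ℤ}
    (h : bseq a m = bseq a k) : m = k := by
  obtain ⟨h0, h1⟩ := ha
  have hp : (0:ℝ) < 1 + a := by linarith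
  have hq : (0:ℝ) < 1 - a := by linarith
  have hpm : (0:ℝ) < (1 + a) ^ m := zpow_pos hp m
  have hqm : (0:ℝ) < (1 - a) ^ m := zpow_pos hq m
  have hpk : (0:ℝ) < (1 + a) ^ k := zpow_pos hp k
  have hqk : (0:ℝ) < (1 - a) ^ k := zpow_pos hq k
  have key : ((1+a)/(1-a)) ^ m = ((1+a)/(1-a)) ^ k := by
    rw [div_zpow, div_zpow]
    rw [div_eq_div_iff (by positivity) (by positivity)]
    unfold bseq at h
    rw [div_eq_div_iff (by positivity) (by positivity)] at h
    nlinarith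
  exact zpow_right_injective₀ (by positivity) (by
    intro hcon
    rw [div_eq_one_iff_eq hq.ne'] at hcon
    linarith) key

lemma moebius_maps_ball {b : ℝ} (hb : b ∈ Set.Ioo (-1:ℝ) 1) {z : ℂ} (hz : ‖z‖ < 1) :
    ‖(z - (b:ℂ)) / (1 - (b:ℂ) * z)‖ < 1 := by
  obtain ⟨hb1, hb2⟩ := hb
  have hden : (1 : ℂ) - (b:ℂ) * z ≠ 0 := by
    intro h
    have : ‖(1:ℂ)‖ ≤ ‖(b:ℂ) * z‖ := by
      have : (1:ℂ) = (b:ℂ) * z := by linear_combination h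
      rw [this]
    rw [norm_one, norm_mul, Complex.norm_real, Real.norm_eq_abs] at this
    nlinarith [abs_nonneg b, abs_lt.2 ⟨hb1, hb2⟩, norm_nonneg z]
  rw [norm_div, div_lt_one (norm_pos_iff.2 hden)]
  have hsq : ∀ w : ℂ, ‖w‖ ^ 2 = Complex.normSq w := fun w => by
    rw [Complex.sq_norm]
  have h1 : ‖z - (b:ℂ)‖ ^ 2 < ‖1 - (b:ℂ) * z‖ ^ 2 := by
    rw [hsq, hsq]
    simp only [Complex.normSq_apply, Complex.sub_re, Complex.sub_im, Complex.mul_re,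
      Complex.mul_im, Complex.one_re, Complex.one_im, Complex.ofReal_re, Complex.ofReal_im]
    have hz2 : z.re ^ 2 + z.im ^ 2 < 1 := by
      have h2 := hsq z
      rw [Complex.normSq_apply] at h2
      nlinarith [hz, norm_nonneg z]
    nlinarith [mul_pos (show (0:ℝ) < 1 - b^2 by nlinarith)
      (show (0:ℝ) < 1 - (z.re^2 + z.im^2) by nlinarith)]
  nlinarith [norm_nonneg (z - (b:ℂ)), norm_nonneg (1 - (b:ℂ) * z)]

lemma moebius_den_ne {b : ℝ} (hb : b ∈ Set.Ioo (-1:ℝ) 1) {z : ℂ} (hz : ‖z‖ < 1) :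
    (1 : ℂ) - (b:ℂ) * z ≠ 0 := by
  obtain ⟨hb1, hb2⟩ := hb
  intro h
  have h1 : (1:ℂ) = (b:ℂ) * z := by linear_combination h
  have : ‖(1:ℂ)‖ = ‖(b:ℂ) * z‖ := by rw [h1]
  rw [norm_one, norm_mul, Complex.norm_real, Real.norm_eq_abs] at this
  nlinarith [abs_nonneg b, abs_lt.2 ⟨hb1, hb2⟩, norm_nonneg z]

lemma gammaPow_maps_ball {a : ℝ} (ha : a ∈ Set.Ioo (0:ℝ) 1) (m : ℤ) {z : ℂ} (hz : ‖z‖ < 1) :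
    ‖gammaPow a m z‖ < 1 :=
  moebius_maps_ball (bseq_mem ha m) hz

lemma gammaPow_comp {a : ℝ} (ha : a ∈ Set.Ioo (0:ℝ) 1) (m k : ℤ) {z : ℂ} (hz : ‖z‖ < 1) :
    gammaPow a m (gammaPow a k z) = gammaPow a (m + k) z := by
  have hbm := bseq_mem ha m
  have hbk := bseq_mem ha k
  have hbmk := bseq_mem ha (m + k)
  have hd1 : (1 : ℂ) - (bseq a k : ℂ) * z ≠ 0 := moebius_den_ne hbk hz
  have hd3 : (1 : ℂ) - (bseq a (m+k) : ℂ) * z ≠ 0 := moebius_den_ne hbmk hz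
  have hwball : ‖gammaPow a k z‖ < 1 := gammaPow_maps_ball ha k hz
  have hd2 : (1 : ℂ) - (bseq a m : ℂ) * (gammaPow a k z) ≠ 0 := moebius_den_ne hbm hwball
  have hadd : ((bseq a (m+k) : ℂ)) * (1 + (bseq a m : ℂ) * (bseq a k : ℂ))
      = (bseq a m : ℂ) + (bseq a k : ℂ) := by
    exact_mod_cast bseq_add ha m k
  unfold gammaPow at *
  rw [div_eq_div_iff hd2 hd3]
  have hd1' : (1 : ℂ) - z * (bseq a k : ℂ) ≠ 0 := by rwa [mul_comm] at hd1
  field_simp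
  linear_combination (-(z^2) + 1) * hadd

lemma gammaPow_zero (a : ℝ) (z : ℂ) : gammaPow a 0 z = z := by
  simp [gammaPow, bseq_zero]

lemma gammaPow_neg_arg {a : ℝ} (ha : a ∈ Set.Ioo (0:ℝ) 1) (m : ℤ) (z : ℂ) :
    gammaPow a m (-z) = - gammaPow a (-m) z := by
  simp only [gammaPow, bseq_neg ha]
  push_cast
  rw [← neg_div]
  ring_nf

/-- The group `Γ₂` generated by `β(z) = −z` and `γ(z) = (z − a)/(1 − a z)` is the free
product `ℤ/2 ∗ ℤ/2`: every element is (on the disk) uniquely of the form `α^m` or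
`α^m ∘ β` with `m : ℤ`, and `α^m` is the identity only for `m = 0`. -/
theorem group_generated_by_two_involutions
    (a : ℝ) (ha : a ∈ Set.Ioo (0:ℝ) 1)
    (β γ γinv : ℂ → ℂ)
    (hβ : β = fun z => -z)
    (hγ : γ = fun z : ℂ => (z - (a:ℂ)) / (1 - (a:ℂ) * z))
    (hγinv : γinv = fun z : ℂ => (z + (a:ℂ)) / (1 + (a:ℂ) * z))
    (Γ₂ : Set (ℂ → ℂ))
    (hidm : id ∈ Γ₂) (hβm : β ∈ Γ₂) (hγm : γ ∈ Γ₂) (hγinvm : γinv ∈ Γ₂)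
    (hcomp : ∀ f ∈ Γ₂, ∀ g ∈ Γ₂, f ∘ g ∈ Γ₂)
    (hmin : ∀ S : Set (ℂ → ℂ), id ∈ S → β ∈ S → γ ∈ S → γinv ∈ S →
      (∀ f ∈ S, ∀ g ∈ S, f ∘ g ∈ S) → Γ₂ ⊆ S) :
    (∀ f ∈ Γ₂, ∃ m : ℤ,
        (∀ z ∈ Metric.ball (0:ℂ) 1, f z = gammaPow a m z) ∨
        (∀ z ∈ Metric.ball (0:ℂ) 1, f z = gammaPow a m (β z))) ∧
    (∀ m : ℤ, (∀ z ∈ Metric.ball (0:ℂ) 1, gammaPow a m z = z) → m = 0) ∧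
    (∀ m k : ℤ, (∀ z ∈ Metric.ball (0:ℂ) 1, gammaPow a m z = gammaPow a k z) → m = k) ∧
    (∀ m k : ℤ,
      ¬ (∀ z ∈ Metric.ball (0:ℂ) 1, gammaPow a m z = gammaPow a k (β z))) := by
  have h0ball : (0:ℂ) ∈ Metric.ball (0:ℂ) 1 := by
    simp [Metric.mem_ball_self]
  have hP0 : ∀ m : ℤ, gammaPow a m 0 = -(bseq a m : ℂ) := by
    intro m; simp [gammaPow]
  -- third claim (injectivity), proved first
  have claim3 : ∀ m k : ℤ, (∀ z ∈ Metric.ball (0:ℂ) 1, gammaPow a m z = gammaPow a k z)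
      → m = k := by
    intro m k h
    have h0 := h 0 h0ball
    rw [hP0, hP0, neg_inj] at h0
    exact bseq_inj ha (by exact_mod_cast h0)
  refine ⟨?_, ?_, claim3, ?_⟩
  · -- normal form claim
    intro f hf
    set S : Set (ℂ → ℂ) := {f | ∃ m : ℤ,
        (∀ z ∈ Metric.ball (0:ℂ) 1, f z = gammaPow a m z) ∨
        (∀ z ∈ Metric.ball (0:ℂ) 1, f z = gammaPow a m (β z))} with hS
    have hsub : Γ₂ ⊆ S := by
      apply hmin
      · exact ⟨0, Or.inl fun z _ => (gammaPow_zero a z).symm⟩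
      · exact ⟨0, Or.inr fun z _ => (gammaPow_zero a (β z)).symm⟩
      · refine ⟨1, Or.inl fun z _ => ?_⟩
        rw [hγ, gammaPow]
        simp [bseq_one ha]
      · refine ⟨-1, Or.inl fun z _ => ?_⟩
        rw [hγinv, gammaPow]
        rw [bseq_neg ha 1, bseq_one ha]
        push_cast
        ring_nf
      · rintro f ⟨m, hfm⟩ g ⟨k, hgk⟩
        have hβball : ∀ z : ℂ, z ∈ Metric.ball (0:ℂ) 1 → β z ∈ Metric.ball (0:ℂ) 1 := by
          intro z hz
          rw [mem_ball_zero_iff] at *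
          simpa [hβ] using hz
        have hPball : ∀ (n : ℤ) (z : ℂ), z ∈ Metric.ball (0:ℂ) 1 →
            gammaPow a n z ∈ Metric.ball (0:ℂ) 1 := by
          intro n z hz
          rw [mem_ball_zero_iff] at *
          exact gammaPow_maps_ball ha n hz
        rcases hfm with hfm | hfm <;> rcases hgk with hgk | hgk
        · refine ⟨m + k, Or.inl fun z hz => ?_⟩
          rw [Function.comp_apply, hgk z hz, hfm _ (hPball k z hz),
            gammaPow_comp ha m k (mem_ball_zero_iff.mp hz)]
        · refine ⟨m + k, Or.inr fun z hz => ?_⟩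
          rw [Function.comp_apply, hgk z hz, hfm _ (hPball k _ (hβball z hz)),
            gammaPow_comp ha m k (mem_ball_zero_iff.mp (hβball z hz))]
        · refine ⟨m - k, Or.inr fun z hz => ?_⟩
          rw [Function.comp_apply, hgk z hz, hfm _ (hPball k z hz)]
          have h1 : β (gammaPow a k z) = -(gammaPow a k z) := by simp only [hβ]
          have h2 : β z = -z := by simp only [hβ]
          rw [h1, h2, gammaPow_neg_arg ha m, gammaPow_comp ha (-m) k
            (mem_ball_zero_iff.mp hz), gammaPow_neg_arg ha (m - k)]
          have hind : (-m + k) = -(m - k) := by ring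
          rw [hind]
        · refine ⟨m - k, Or.inl fun z hz => ?_⟩
          rw [Function.comp_apply, hgk z hz,
            hfm _ (hPball k _ (hβball z hz))]
          have h2 : β z = -z := by simp only [hβ]
          have h1 : β (gammaPow a k (β z)) = -(gammaPow a k (-z)) := by
            simp only [hβ]
          rw [h1, gammaPow_neg_arg ha k, neg_neg, gammaPow_comp ha m (-k)
            (mem_ball_zero_iff.mp hz)]
          have hind : (m + -k) = m - k := by ring
          rw [hind]
    exact hsub hf
  · -- identity claim
    intro m h
    refine claim3 m 0 fun z hz => ?_
    rw [h z hz, gammaPow_zero]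
  · -- no α^m = α^k ∘ β
    intro m k h
    have hβ0 : β 0 = 0 := by rw [hβ]; simp
    have h0 := h 0 h0ball
    rw [hβ0, hP0, hP0, neg_inj] at h0
    have hmk : m = k := bseq_inj ha (by exact_mod_cast h0)
    subst hmk
    -- evaluate at z = 1/2
    have hhalf : (1/2 : ℂ) ∈ Metric.ball (0:ℂ) 1 := by
      rw [mem_ball_zero_iff]
      simp only [norm_div, norm_one]
      norm_num
    have hh := h (1/2) hhalf
    have hβh : β (1/2 : ℂ) = -(1/2) := by rw [hβ]
    rw [hβh] at hh
    have hbm := bseq_mem ha m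
    set b := bseq a m with hb
    have hd1 : (1:ℂ) - (b:ℂ) * (1/2) ≠ 0 := by
      apply moebius_den_ne hbm
      simp only [norm_div, norm_one]
      norm_num
    have hd2 : (1:ℂ) - (b:ℂ) * (-(1/2)) ≠ 0 := by
      apply moebius_den_ne hbm
      simp only [norm_neg, norm_div, norm_one]
      norm_num
    rw [gammaPow, gammaPow, ← hb, div_eq_div_iff hd1 hd2] at hh
    have hb2 : ((b:ℂ))^2 = 1 := by linear_combination -hh
    have hb2' : b^2 = 1 := by exact_mod_cast hb2
    obtain ⟨hbl, hbr⟩ := hbm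
    nlinarith
end
end

section
/- Let ℋ be a reproducing kernel Hilbert space of functions on a set X such that the kernel functions k_x are nonzero for all x, and let 𝒜 ⊆ B(ℋ) be the algebra of multiplication operators by multipliers of ℋ. If T ∈ B(ℋ) leaves invariant every closed subspace that is invariant for 𝒜, then T ∈ 𝒜; i.e., the multiplier algebra is a reflexive operator algebra. -/
open scoped InnerProductSpace

noncomputable section

/-- The multiplier algebra of a reproducing kernel Hilbert space (with nonzero kernel
functions) is reflexive: an operator leaving invariant every closed subspace that is
invariant for all multiplication operators is itself a multiplication operator. -/
theorem multiplier_algebra_reflexive {X : Type*} {H : Type*} [NormedAddCommGroup H]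
    [InnerProductSpace ℂ H] [CompleteSpace H]
    (ev : H →ₗ[ℂ] (X → ℂ)) (k : X → H)
    (hk : ∀ x, k x ≠ 0)
    (hrep : ∀ (f : H) (x : X), ev f x = ⟪k x, f⟫_ℂ)
    (T : H →L[ℂ] H)
    (hT : ∀ M : Submodule ℂ H, IsClosed (M : Set H) →
      (∀ A : H →L[ℂ] H,
        (∃ φ : X → ℂ, ∀ (f : H) (x : X), ev (A f) x = φ x * ev f x) →
        ∀ f ∈ M, A f ∈ M) →
      ∀ f ∈ M, T f ∈ M) :
    ∃ φ : X → ℂ, ∀ (f : H) (x : X), ev (T f) x = φ x * ev f x := by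
  refine ⟨fun x => ev (T (k x)) x / ev (k x) x, fun f x => ?_⟩
  have hkk : ev (k x) x ≠ 0 := by
    rw [hrep]
    exact inner_self_ne_zero.mpr (hk x)
  -- the kernel of evaluation at x is closed and invariant under multiplication operators
  set L : H →L[ℂ] ℂ := innerSL ℂ (k x) with hL
  set M : Submodule ℂ H := LinearMap.ker (L : H →ₗ[ℂ] ℂ) with hM
  have hMmem : ∀ g : H, g ∈ M ↔ ev g x = 0 := by
    intro g
    rw [hrep]
    exact Iff.rfl
  have hMclosed : IsClosed (M : Set H) := by
    exact isClosed_singleton.preimage L.continuous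
  have hMinv : ∀ A : H →L[ℂ] H,
      (∃ φ : X → ℂ, ∀ (f : H) (x : X), ev (A f) x = φ x * ev f x) →
      ∀ f ∈ M, A f ∈ M := by
    rintro A ⟨φ, hφ⟩ g hg
    rw [hMmem] at hg ⊢
    rw [hφ, hg, mul_zero]
  have hTM := hT M hMclosed hMinv
  -- decompose f
  set c : ℂ := ev f x / ev (k x) x with hc
  have hg : f - c • k x ∈ M := by
    rw [hMmem]
    simp only [map_sub, map_smul, Pi.sub_apply, Pi.smul_apply, smul_eq_mul, hc]
    field_simp; simp
  have hTg : ev (T (f - c • k x)) x = 0 := (hMmem _).mp (hTM _ hg)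
  have hexp : T f = c • T (k x) + T (f - c • k x) := by
    rw [map_sub, map_smul]; abel
  calc ev (T f) x = c * ev (T (k x)) x + ev (T (f - c • k x)) x := by
        rw [hexp]; simp [map_add, map_smul]
    _ = ev (T (k x)) x / ev (k x) x * ev f x := by
        rw [hTg, add_zero, hc]; field_simp
end
end

section
/- Let ℳ be a closed subspace of H² containing the constant function 1, let 𝒜 be the algebra of multipliers of ℳ (functions φ with φℳ ⊆ ℳ), represented as multiplication operators on ℳ, and suppose the closure of 𝒜·1 in ℳ equals ℳ. Then the commutant of 𝒜 in B(ℳ) equals 𝒜: every bounded operator T on ℳ commuting with all multiplication operators M_g (g ∈ 𝒜) is itself a multiplication operator M_h with h = T(1) ∈ 𝒜. -/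
open scoped InnerProductSpace

noncomputable section

/-- Let `ℳ` be a Hilbert function space (a reproducing kernel Hilbert space, as any
closed subspace of `H²` is) containing the constant function `1`, and let `𝒜` be its
multiplier algebra, represented by multiplication operators. If `𝒜 · 1` is dense in
`ℳ`, then the commutant of `𝒜` equals `𝒜`: any bounded operator `T` commuting with all
multiplication operators is multiplication by `h = T(1)`. -/
theorem commutant_of_multiplier_algebra {X : Type*} {H : Type*} [NormedAddCommGroup H]
    [InnerProductSpace ℂ H] [CompleteSpace H]
    (ev : H →ₗ[ℂ] (X → ℂ)) (hinj : Function.Injective ev)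
    (k : X → H) (hrep : ∀ (f : H) (x : X), ev f x = ⟪k x, f⟫_ℂ)
    (e : H) (he : ∀ x, ev e x = 1)
    (hdense : Dense {g : H | ∃ A : H →L[ℂ] H,
      (∃ φ : X → ℂ, ∀ (f : H) (x : X), ev (A f) x = φ x * ev f x) ∧ g = A e})
    (T : H →L[ℂ] H)
    (hT : ∀ A : H →L[ℂ] H,
      (∃ φ : X → ℂ, ∀ (f : H) (x : X), ev (A f) x = φ x * ev f x) →
      T.comp A = A.comp T) :
    ∀ (f : H) (x : X), ev (T f) x = ev (T e) x * ev f x := by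
  intro f x
  -- Both sides are continuous functions of `f`; they agree on the dense set.
  have hc1 : Continuous fun g : H => ev (T g) x := by
    have : (fun g : H => ev (T g) x) = fun g : H => ⟪k x, T g⟫_ℂ := by
      funext g; exact hrep (T g) x
    rw [this]
    exact (innerSL ℂ (k x)).continuous.comp T.continuous
  have hc2 : Continuous fun g : H => ev (T e) x * ev g x := by
    have : (fun g : H => ev (T e) x * ev g x)
        = fun g : H => ev (T e) x * ⟪k x, g⟫_ℂ := by
      funext g; rw [hrep g x]
    rw [this]
    exact continuous_const.mul (innerSL ℂ (k x)).continuous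
  have heq : Set.EqOn (fun g : H => ev (T g) x) (fun g : H => ev (T e) x * ev g x)
      {g : H | ∃ A : H →L[ℂ] H,
        (∃ φ : X → ℂ, ∀ (f : H) (x : X), ev (A f) x = φ x * ev f x) ∧ g = A e} := by
    rintro g ⟨A, hA, rfl⟩
    obtain ⟨φ, hφ⟩ := hA
    have hcomm := hT A ⟨φ, hφ⟩
    have h1 : T (A e) = A (T e) := by
      have := congrArg (fun S : H →L[ℂ] H => S e) hcomm
      simpa using this
    simp only [h1, hφ (T e) x, hφ e x, he x, mul_one, mul_comm]
  have := Continuous.ext_on hdense hc1 hc2 heq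
  exact congrFun this f
end
end
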